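/- Let Λ = Λ_N(ℂ) be the exterior algebra of the free module ℂ^N over ℂ, with body map π : Λ → ℂ. Let m, n with m + n ≥ 1, let λ : Fin (m+n) → ℂ be injective, and let μ : Fin (m+n) → Λ satisfy π(μⱼ) = 0 for all j. If for every k = 1, …, m+n one has Σ_{j < m} ((λⱼ·1) + μⱼ)ᵏ − Σ_{m ≤ j} ((λⱼ·1) + μⱼ)ᵏ = (Σ_{j < m} λⱼᵏ − Σ_{m ≤ j} λⱼᵏ)·1 in Λ, then μⱼ = 0 for all j. -/

import Mathlib

set_option maxHeartbeats 1000000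
set_option synthInstance.maxHeartbeats 400000

open ExteriorAlgebra Finset

noncomputable section DiagSupermatrixAux

/-- The Grassmann algebra. -/
abbrev GrassA (N : ℕ) := ExteriorAlgebra ℂ (Fin N → ℂ)

/-- The degree-one part of the exterior algebra. -/
abbrev grassP (N : ℕ) : Submodule ℂ (GrassA N) :=
  LinearMap.range (ι ℂ : (Fin N → ℂ) →ₗ[ℂ] GrassA N)

/-- The filtration by total exterior degree `≥ d`. -/
def grassF (N d : ℕ) : Submodule ℂ (GrassA N) :=
  ⨆ i : {i : ℕ // d ≤ i}, grassP N ^ (i : ℕ)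

lemma mem_grassF_of_mem_pow {N d i : ℕ} (hi : d ≤ i) {x : GrassA N}
    (hx : x ∈ grassP N ^ i) : x ∈ grassF N d :=
  le_iSup (fun i : {i : ℕ // d ≤ i} => grassP N ^ (i : ℕ)) ⟨i, hi⟩ hx

lemma grassF_antitone {N d e : ℕ} (h : d ≤ e) : grassF N e ≤ grassF N d := by
  refine iSup_le fun i => ?_
  exact le_iSup (fun i : {i : ℕ // d ≤ i} => grassP N ^ (i : ℕ)) ⟨(i : ℕ), h.trans i.2⟩

lemma mul_mem_grassF {N d e : ℕ} {x y : GrassA N} (hx : x ∈ grassF N d)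
    (hy : y ∈ grassF N e) : x * y ∈ grassF N (d + e) := by
  refine Submodule.iSup_induction (motive := fun x => x * y ∈ grassF N (d + e)) _ hx ?_ ?_ ?_
  · rintro ⟨i, hi⟩ x hxi
    refine Submodule.iSup_induction (motive := fun y => x * y ∈ grassF N (d + e)) _ hy ?_ ?_ ?_
    · rintro ⟨j, hj⟩ y hyj
      refine mem_grassF_of_mem_pow (Nat.add_le_add hi hj) ?_
      rw [pow_add]
      exact Submodule.mul_mem_mul hxi hyj
    · simp only [mul_zero]; exact Submodule.zero_mem _
    · intro a b ha hb
      rw [mul_add]; exact Submodule.add_mem _ ha hb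
  · simp only [zero_mul]; exact Submodule.zero_mem _
  · intro a b ha hb
    rw [add_mul]; exact Submodule.add_mem _ ha hb

lemma pow_mem_grassF {N d : ℕ} {x : GrassA N} (hx : x ∈ grassF N d) :
    ∀ m : ℕ, x ^ m ∈ grassF N (m * d)
  | 0 => by
      rw [pow_zero, Nat.zero_mul]
      exact mem_grassF_of_mem_pow (le_refl 0)
        (by rw [pow_zero]; exact Submodule.mem_one.mpr ⟨1, map_one _⟩)
  | (m + 1) => by
      have := mul_mem_grassF (pow_mem_grassF hx m) hx
      rw [← pow_succ] at this
      convert this using 2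
      ring

lemma algebraMapInv_eq_zero_of_mem_grassF {N : ℕ} {x : GrassA N} (hx : x ∈ grassF N 1) :
    algebraMapInv x = (0 : ℂ) := by
  refine Submodule.iSup_induction (motive := fun x => algebraMapInv x = (0 : ℂ)) _ hx ?_ ?_ ?_
  · rintro ⟨i, hi⟩ x hxi
    obtain ⟨j, rfl⟩ := Nat.exists_eq_add_of_le hi
    have hxi' : x ∈ grassP N ^ j * grassP N := by
      rw [← pow_succ, Nat.add_comm j 1]; exact hxi
    refine Submodule.mul_induction_on hxi' ?_ ?_
    · rintro a _ b ⟨m, rfl⟩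
      rw [map_mul]
      have : algebraMapInv (ι ℂ m) = (0 : ℂ) := by simp [algebraMapInv]
      rw [this, mul_zero]
    · intro a b ha hb
      rw [map_add, ha, hb, add_zero]
  · exact map_zero _
  · intro a b ha hb
    rw [map_add, ha, hb, add_zero]

lemma mem_grassF_one {N : ℕ} {x : GrassA N} (hx : algebraMapInv x = (0 : ℂ)) :
    x ∈ grassF N 1 := by
  classical
  set 𝒜 : ℕ → Submodule ℂ (GrassA N) := fun i => ⋀[ℂ]^i (Fin N → ℂ) with h𝒜
  have hdec : ∑ i ∈ DFinsupp.support (DirectSum.decompose 𝒜 x),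
      ((DirectSum.decompose 𝒜 x) i : GrassA N) = x := DirectSum.sum_support_decompose 𝒜 x
  have hkey : ∀ i : ℕ, i ≠ 0 → ((DirectSum.decompose 𝒜 x) i : GrassA N) ∈ grassF N 1 := by
    intro i hi
    exact mem_grassF_of_mem_pow (Nat.one_le_iff_ne_zero.mpr hi)
      ((DirectSum.decompose 𝒜 x) i).2
  have h0 : ((DirectSum.decompose 𝒜 x) 0 : GrassA N) = 0 := by
    have hmem : ((DirectSum.decompose 𝒜 x) 0 : GrassA N) ∈ (1 : Submodule ℂ (GrassA N)) := by
      have h00 : 𝒜 0 = (1 : Submodule ℂ (GrassA N)) := pow_zero (grassP N)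
      rw [← h00]
      exact ((DirectSum.decompose 𝒜 x) 0).2
    obtain ⟨r, hr⟩ := Submodule.mem_one.mp hmem
    have hπ : algebraMapInv (((DirectSum.decompose 𝒜 x) 0 : GrassA N)) = r := by
      rw [← hr]; exact algebraMap_leftInverse _ r
    have hsum : algebraMapInv x
        = ∑ i ∈ DFinsupp.support (DirectSum.decompose 𝒜 x),
            algebraMapInv (((DirectSum.decompose 𝒜 x) i : GrassA N)) := by
      rw [← map_sum, hdec]
    by_cases hmem0 : 0 ∈ DFinsupp.support (DirectSum.decompose 𝒜 x)
    · have : algebraMapInv x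
          = algebraMapInv (((DirectSum.decompose 𝒜 x) 0 : GrassA N)) := by
        rw [hsum]
        refine Finset.sum_eq_single_of_mem 0 hmem0 ?_
        intro i _ hi
        exact algebraMapInv_eq_zero_of_mem_grassF (hkey i hi)
      rw [hx] at this
      rw [← hr, ← hπ, ← this, map_zero]
    · rw [DFinsupp.notMem_support_iff] at hmem0
      rw [hmem0]; rfl
  rw [← hdec]
  refine Submodule.sum_mem _ fun i _ => ?_
  by_cases hi : i = 0
  · subst hi; rw [h0]; exact Submodule.zero_mem _
  · exact hkey i hi

instance grassNoZeroSMul (N : ℕ) : NoZeroSMulDivisors ℂ (GrassA N) := by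
  constructor
  intro c x h
  by_cases hc : c = 0
  · exact Or.inl hc
  · exact Or.inr (by rw [← inv_smul_smul₀ hc x, h, smul_zero])

lemma grassP_pow_top (N : ℕ) : grassP N ^ (N + 1) = ⊥ := by
  have h0 : ∀ v : Fin (N + 1) → (Fin N → ℂ), ιMulti ℂ (N + 1) v = 0 := by
    intro v
    refine AlternatingMap.map_linearDependent _ v ?_
    intro h
    have := h.fintype_card_le_finrank
    simp [Module.finrank_fintype_fun_eq_card] at this
  have : (⋀[ℂ]^(N+1) (Fin N → ℂ)) = ⊥ := by
    rw [← ιMulti_span_fixedDegree]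
    rw [Submodule.span_eq_bot]
    rintro x ⟨v, rfl⟩
    exact h0 v
  exact this

lemma grassF_top (N : ℕ) : grassF N (N + 1) = ⊥ := by
  refine le_antisymm (iSup_le ?_) bot_le
  rintro ⟨i, hi⟩
  obtain ⟨j, rfl⟩ := Nat.exists_eq_add_of_le hi
  rw [pow_add, grassP_pow_top, Submodule.bot_mul]

/-- Vandermonde inversion for module-valued vectors. -/
lemma vandermonde_mem {κ : ℕ} {l : Fin κ → ℂ} (hl : Function.Injective l)
    {A : Type*} [AddCommGroup A] [Module ℂ A] (S : Submodule ℂ A) (v : Fin κ → A)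
    (h : ∀ k : Fin κ, (∑ j, (l j ^ (k : ℕ)) • v j) ∈ S) : ∀ j, v j ∈ S := by
  intro j
  set W : Matrix (Fin κ) (Fin κ) ℂ := Matrix.of fun k i => l i ^ (k : ℕ) with hW
  have hdet : IsUnit W.det := by
    have hWt : W = (Matrix.vandermonde l).transpose := by
      ext k i; simp [hW, Matrix.vandermonde, Matrix.transpose_apply]
    rw [hWt, Matrix.det_transpose]
    exact (Matrix.det_vandermonde_ne_zero_iff.mpr hl).isUnit
  have key : v j = ∑ k, (W⁻¹ j k) • ∑ i, W k i • v i := by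
    calc v j = ∑ i, ((1 : Matrix (Fin κ) (Fin κ) ℂ) j i) • v i := by
          simp [Matrix.one_apply, ite_smul]
      _ = ∑ i, ((W⁻¹ * W) j i) • v i := by rw [Matrix.nonsing_inv_mul _ hdet]
      _ = ∑ i, (∑ k, W⁻¹ j k * W k i) • v i := by simp [Matrix.mul_apply]
      _ = ∑ i, ∑ k, (W⁻¹ j k * W k i) • v i := by simp [Finset.sum_smul]
      _ = ∑ k, ∑ i, (W⁻¹ j k * W k i) • v i := Finset.sum_comm
      _ = ∑ k, (W⁻¹ j k) • ∑ i, W k i • v i := by simp [Finset.smul_sum, smul_smul]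
  rw [key]
  exact Submodule.sum_mem _ fun k _ => Submodule.smul_mem _ _ (h k)

/-- Expansion of a binomial power modulo the square of the filtration. -/
lemma expand_pow_mem {N d : ℕ} (c : ℂ) {x : GrassA N} (hx : x ∈ grassF N d)
    (k : ℕ) (hk : 1 ≤ k) :
    (algebraMap ℂ (GrassA N) c + x) ^ k
      - algebraMap ℂ (GrassA N) (c ^ k) - ((k : ℂ) * c ^ (k - 1)) • x
      ∈ grassF N (2 * d) := by
  obtain ⟨k', rfl⟩ : ∃ k', k = k' + 1 := ⟨k - 1, by omega⟩
  set a : GrassA N := algebraMap ℂ (GrassA N) c with ha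
  have hcomm : Commute x a := (Algebra.commutes c x).symm
  rw [add_comm a x, hcomm.add_pow]
  rw [Finset.sum_range_succ', Finset.sum_range_succ']
  have hf0 : x ^ 0 * a ^ (k' + 1 - 0) * (((k' + 1).choose 0 : ℕ) : GrassA N)
      = algebraMap ℂ (GrassA N) (c ^ (k' + 1)) := by
    simp [ha, map_pow]
  have hf1 : x ^ (0 + 1) * a ^ (k' + 1 - (0 + 1)) * (((k' + 1).choose (0 + 1) : ℕ) : GrassA N)
      = (((k' + 1 : ℕ) : ℂ) * c ^ (k' + 1 - 1)) • x := by
    rw [pow_one, Nat.choose_one_right]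
    rw [ha, ← map_pow, ← map_natCast (algebraMap ℂ (GrassA N)) (k' + 1),
      mul_assoc, ← map_mul, ← Algebra.commutes, ← Algebra.smul_def]
    congr 1
    push_cast [Nat.add_sub_cancel]
    ring
  rw [hf0, hf1]
  have hgoal : (∑ i ∈ Finset.range k',
        x ^ (i + 1 + 1) * a ^ (k' + 1 - (i + 1 + 1)) * (((k' + 1).choose (i + 1 + 1) : ℕ) : GrassA N))
      + (((k' + 1 : ℕ) : ℂ) * c ^ (k' + 1 - 1)) • x + algebraMap ℂ (GrassA N) (c ^ (k' + 1))
      - algebraMap ℂ (GrassA N) (c ^ (k' + 1)) - (((k' + 1 : ℕ) : ℂ) * c ^ (k' + 1 - 1)) • x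
      = ∑ i ∈ Finset.range k',
        x ^ (i + 1 + 1) * a ^ (k' + 1 - (i + 1 + 1)) * (((k' + 1).choose (i + 1 + 1) : ℕ) : GrassA N) := by
    abel
  rw [hgoal]
  refine Submodule.sum_mem _ fun i _ => ?_
  have hx2 : x ^ (i + 1 + 1) ∈ grassF N (2 * d) := by
    refine grassF_antitone ?_ (pow_mem_grassF hx (i + 1 + 1))
    nlinarith
  have hsc : a ^ (k' + 1 - (i + 1 + 1)) * (((k' + 1).choose (i + 1 + 1) : ℕ) : GrassA N)
      = algebraMap ℂ (GrassA N)
          (c ^ (k' + 1 - (i + 1 + 1)) * (((k' + 1).choose (i + 1 + 1) : ℕ) : ℂ)) := by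
    rw [map_mul, map_pow, map_natCast, ha]
  rw [mul_assoc, hsc, ← Algebra.commutes, ← Algebra.smul_def]
  exact Submodule.smul_mem _ _ hx2

/-- Rewriting a signed sum as a difference of filtered sums. -/
lemma signed_sum_eq {m n : ℕ} {A : Type*} [AddCommGroup A] [Module ℂ A]
    (X : Fin (m + n) → A) :
    ∑ j : Fin (m + n), (if (j : ℕ) < m then (1 : ℂ) else -1) • X j
      = (∑ j ∈ Finset.univ.filter (fun j : Fin (m + n) => (j : ℕ) < m), X j)
        - ∑ j ∈ Finset.univ.filter (fun j : Fin (m + n) => m ≤ (j : ℕ)), X j := by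
  classical
  have : ∀ j : Fin (m + n),
      (if (j : ℕ) < m then (1 : ℂ) else -1) • X j
        = if (j : ℕ) < m then X j else - X j := by
    intro j; split_ifs <;> simp
  rw [Finset.sum_congr rfl fun j _ => this j, Finset.sum_ite]
  rw [Finset.sum_neg_distrib, ← sub_eq_add_neg]
  congr 2
  apply Finset.filter_congr
  intro j _
  simp [not_lt]

end DiagSupermatrixAux

/-- A diagonal supermatrix over the Grassmann algebra `Λ_N(ℂ)` whose body is
`diag(λ₁,…,λ_{m+n})` with pairwise distinct eigenvalues and whose supertraces
`str(Dᵏ)` agree with those of its body for `k = 1, …, m+n` must equal its body. -/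
theorem diagonal_supermatrix_eq_body (N m n : ℕ) (hmn : 1 ≤ m + n)
    (l : Fin (m + n) → ℂ) (hl : Function.Injective l)
    (μ : Fin (m + n) → ExteriorAlgebra ℂ (Fin N → ℂ))
    (hbody : ∀ j, ExteriorAlgebra.algebraMapInv (μ j) = 0)
    (hstr : ∀ k : ℕ, 1 ≤ k → k ≤ m + n →
      ∑ j ∈ Finset.univ.filter (fun j : Fin (m + n) => (j : ℕ) < m),
          (algebraMap ℂ (ExteriorAlgebra ℂ (Fin N → ℂ)) (l j) + μ j) ^ k
        - ∑ j ∈ Finset.univ.filter (fun j : Fin (m + n) => m ≤ (j : ℕ)),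
          (algebraMap ℂ (ExteriorAlgebra ℂ (Fin N → ℂ)) (l j) + μ j) ^ k
      = algebraMap ℂ (ExteriorAlgebra ℂ (Fin N → ℂ))
          (∑ j ∈ Finset.univ.filter (fun j : Fin (m + n) => (j : ℕ) < m), l j ^ k
            - ∑ j ∈ Finset.univ.filter (fun j : Fin (m + n) => m ≤ (j : ℕ)), l j ^ k)) :
    ∀ j, μ j = 0 := by
  classical
  set aM := algebraMap ℂ (GrassA N) with haM
  set ε : Fin (m + n) → ℂ := fun j => if (j : ℕ) < m then 1 else -1 with hε
  have hεne : ∀ j, ε j ≠ 0 := by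
    intro j; rw [hε]; dsimp only; split_ifs <;> norm_num
  set v : Fin (m + n) → GrassA N := fun j => ε j • μ j with hv
  -- Claim 1: the signed sum of the differences vanishes.
  have claim1 : ∀ k : ℕ, 1 ≤ k → k ≤ m + n →
      ∑ j, ε j • ((aM (l j) + μ j) ^ k - aM (l j ^ k)) = 0 := by
    intro k hk1 hk2
    have h := hstr k hk1 hk2
    simp only [hε]
    rw [signed_sum_eq (fun j => (aM (l j) + μ j) ^ k - aM (l j ^ k))]
    rw [Finset.sum_sub_distrib, Finset.sum_sub_distrib]
    rw [map_sub, map_sum, map_sum] at h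
    simp only [haM]
    rw [sub_sub_sub_comm, h]
    simp
    exact sub_eq_zero.mpr rfl
  -- Main induction on the filtration degree.
  have main : ∀ d : ℕ, ∀ j, μ j ∈ grassF N (d + 1) := by
    intro d
    induction d with
    | zero => intro j; exact mem_grassF_one (hbody j)
    | succ d ih =>
      have hμd : ∀ j, μ j ∈ grassF N (d + 1) := ih
      -- Claim 2: the power sums of v lie in grassF N (2*(d+1)).
      have claim2 : ∀ k : ℕ, 1 ≤ k → k ≤ m + n →
          (∑ j, (l j ^ (k - 1)) • v j) ∈ grassF N (2 * (d + 1)) := by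
        intro k hk1 hk2
        have e3 : ∑ j, ε j • ((aM (l j) + μ j) ^ k - aM (l j ^ k)
            - ((k : ℂ) * l j ^ (k - 1)) • μ j) ∈ grassF N (2 * (d + 1)) := by
          refine Submodule.sum_mem _ fun j _ => Submodule.smul_mem _ _ ?_
          exact expand_pow_mem (l j) (hμd j) k hk1
        have e4 : ∑ j, ε j • ((aM (l j) + μ j) ^ k - aM (l j ^ k)
            - ((k : ℂ) * l j ^ (k - 1)) • μ j)
            = (∑ j, ε j • ((aM (l j) + μ j) ^ k - aM (l j ^ k)))
              - ∑ j, ((k : ℂ) * l j ^ (k - 1)) • v j := by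
          rw [← Finset.sum_sub_distrib]
          refine Finset.sum_congr rfl fun j _ => ?_
          rw [smul_sub, hv]
          dsimp only
          rw [smul_smul, smul_smul]
          ring_nf
        rw [e4, claim1 k hk1 hk2, zero_sub] at e3
        have e5 : ∑ j, ((k : ℂ) * l j ^ (k - 1)) • v j ∈ grassF N (2 * (d + 1)) := by
          have := Submodule.neg_mem _ e3
          rwa [neg_neg] at this
        have hkne : (k : ℂ) ≠ 0 := by
          exact_mod_cast Nat.cast_ne_zero.mpr (by omega)
        have e6 : ∑ j, (l j ^ (k - 1)) • v j
            = (k : ℂ)⁻¹ • ∑ j, ((k : ℂ) * l j ^ (k - 1)) • v j := by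
          rw [Finset.smul_sum]
          refine Finset.sum_congr rfl fun j _ => ?_
          conv_rhs => rw [smul_smul, inv_mul_cancel_left₀ hkne]
        rw [e6]
        exact Submodule.smul_mem _ _ e5
      -- Vandermonde inversion gives v j ∈ grassF N (2*(d+1)).
      have hvand : ∀ j, v j ∈ grassF N (2 * (d + 1)) := by
        refine vandermonde_mem hl _ v fun k => ?_
        have := claim2 ((k : ℕ) + 1) (by omega) (by omega)
        simpa using this
      intro j
      have : μ j = (ε j)⁻¹ • v j := by
        rw [hv]; dsimp only
        rw [smul_smul, inv_mul_cancel₀ (hεne j), one_smul]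
      rw [this]
      refine Submodule.smul_mem _ _ ?_
      exact grassF_antitone (by omega) (hvand j)
  intro j
  have := main N j
  rw [grassF_top N] at this
  simpa using this
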